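/- Let r > 0 and K₀ ≥ 0, and let ω be a real-valued function continuous on the closed disk {w ∈ ℂ : |w| ≤ r} and twice continuously differentiable on the open disk {w : |w| < r}, satisfying Δω = 2·sinh(2ω) there and |ω| ≤ K₀ on the closed disk. Then for every w = u + iv with |w| < r, |ω(w)| ≤ (K₀/cosh r)·cosh(√2·u)·cosh(√2·v). In particular, |ω(0)| ≤ K₀/cosh r. -/

import Mathlib

/-- The Euclidean Laplacian of a real-valued function on (an open subset of) `ℂ ≅ ℝ²`:
`Δf = ∂²f/∂x² + ∂²f/∂y²`. -/
noncomputable def laplacian (f : ℂ → ℝ) (z : ℂ) : ℝ :=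
  fderiv ℝ (fun w => fderiv ℝ f w 1) z 1 +
    fderiv ℝ (fun w => fderiv ℝ f w Complex.I) z Complex.I

open Filter Topology Set


/-- Second derivative test at a local maximum. -/
lemma sd_test {φ ψ : ℝ → ℝ} {c : ℝ}
    (hφ : ∀ᶠ t in 𝓝 (0 : ℝ), HasDerivAt φ (ψ t) t)
    (hψ : HasDerivAt ψ c 0) (hmax : IsLocalMax φ 0) : c ≤ 0 := by
  by_contra hc
  push_neg at hc
  have hψ0 : ψ 0 = 0 := hmax.hasDerivAt_eq_zero hφ.self_of_nhds
  have hslope : Tendsto (slope ψ 0) (𝓝[≠] 0) (𝓝 c) :=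
    hasDerivAt_iff_tendsto_slope.1 hψ
  have hpos : ∀ᶠ t in 𝓝[>] (0 : ℝ), 0 < ψ t := by
    have h1 : ∀ᶠ t in 𝓝[>] (0 : ℝ), 0 < slope ψ 0 t :=
      (hslope.mono_left (nhdsWithin_mono _ fun t ht => ne_of_gt ht)).eventually
        (eventually_gt_nhds hc)
    filter_upwards [h1, self_mem_nhdsWithin] with t h ht
    rw [slope_def_field, hψ0, sub_zero, sub_zero] at h
    have := mul_pos h ht
    rwa [div_mul_cancel₀ _ (ne_of_gt ht)] at this
  have hpos' : ∀ᶠ t in 𝓝 (0 : ℝ), t ∈ Ioi (0:ℝ) → 0 < ψ t :=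
    eventually_nhdsWithin_iff.1 hpos
  have hall := hφ.and (hmax.and hpos')
  rw [Metric.eventually_nhds_iff] at hall
  obtain ⟨δ, hδ, hP⟩ := hall
  have hhalf : ∀ t ∈ Icc (0:ℝ) (δ/2), |t| < δ := by
    intro t ht
    rw [abs_of_nonneg ht.1]
    linarith [ht.2]
  have hmono : StrictMonoOn φ (Icc (0:ℝ) (δ/2)) := by
    apply strictMonoOn_of_hasDerivWithinAt_pos (convex_Icc _ _) (f' := ψ)
    · intro t ht
      have := (hP (by simpa [Real.dist_eq] using hhalf t ht)).1
      exact this.continuousAt.continuousWithinAt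
    · intro t ht
      rw [interior_Icc] at ht
      have := (hP (by simpa [Real.dist_eq] using hhalf t ⟨le_of_lt ht.1, le_of_lt ht.2⟩)).1
      exact this.hasDerivWithinAt
    · intro t ht
      rw [interior_Icc] at ht
      exact (hP (by simpa [Real.dist_eq] using hhalf t ⟨le_of_lt ht.1, le_of_lt ht.2⟩)).2.2 ht.1
  have h1 : φ 0 < φ (δ/2) :=
    hmono (by constructor <;> linarith) (by constructor <;> linarith) (by linarith)
  have h2 : φ (δ/2) ≤ φ 0 :=
    (hP (y := δ/2) (by rw [Real.dist_eq]; rw [abs_of_nonneg (by linarith)]; linarith)).2.1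
  linarith

/-- 1-D derivative of `t ↦ A * cosh (b + s*t)`. -/
lemma hd_cosh (A b s t : ℝ) :
    HasDerivAt (fun t => A * Real.cosh (b + s * t)) (A * s * Real.sinh (b + s * t)) t := by
  have h0 : HasDerivAt (fun t : ℝ => b + s * t) s t := by
    simpa using ((hasDerivAt_id t).const_mul s).const_add b
  have h := ((Real.hasDerivAt_cosh (b + s * t)).comp t h0).const_mul A
  simpa [Function.comp, mul_comm, mul_assoc, mul_left_comm] using h

lemma hd_sinh (A b s t : ℝ) :
    HasDerivAt (fun t => A * Real.sinh (b + s * t)) (A * s * Real.cosh (b + s * t)) t := by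
  have h0 : HasDerivAt (fun t : ℝ => b + s * t) s t := by
    simpa using ((hasDerivAt_id t).const_mul s).const_add b
  have h := ((Real.hasDerivAt_sinh (b + s * t)).comp t h0).const_mul A
  simpa [Function.comp, mul_comm, mul_assoc, mul_left_comm] using h

/-- Directional second-derivative comparison at an interior maximum. -/
lemma dir_ineq (ω : ℂ → ℝ) (r : ℝ) (z₀ : ℂ) (hz₀ : ‖z₀‖ < r)
    (hC2 : ContDiffOn ℝ 2 ω {w : ℂ | ‖w‖ < r})
    (e : ℂ) (Fl Fl' : ℝ → ℝ) (c2 : ℝ)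
    (hF1 : ∀ t, HasDerivAt Fl (Fl' t) t)
    (hF2 : HasDerivAt Fl' c2 0)
    (hmax : ∀ᶠ t in 𝓝 (0:ℝ), ω (z₀ + t • e) - Fl t ≤ ω z₀ - Fl 0) :
    fderiv ℝ (fun w => fderiv ℝ ω w e) z₀ e ≤ c2 := by
  set S : Set ℂ := {w : ℂ | ‖w‖ < r} with hS
  have hSopen : IsOpen S := isOpen_lt continuous_norm continuous_const
  have hz₀S : z₀ ∈ S := hz₀
  set ℓ : ℝ → ℂ := fun t => z₀ + t • e with hℓ
  have hℓ0 : ℓ 0 = z₀ := by simp [hℓ]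
  have hℓd : ∀ t, HasDerivAt ℓ e t := by
    intro t
    simpa [hℓ] using ((hasDerivAt_id t).smul_const e).const_add z₀
  have hℓc : Continuous ℓ := by continuity
  have hmem : ∀ᶠ t in 𝓝 (0:ℝ), ℓ t ∈ S := by
    apply (hℓc.continuousAt).eventually_mem
    rw [hℓ0]
    exact hSopen.mem_nhds hz₀S
  have hωd : ∀ w ∈ S, DifferentiableAt ℝ ω w := fun w hw =>
    (hC2.contDiffAt (hSopen.mem_nhds hw)).differentiableAt (by norm_num)
  -- first derivative along the line
  have hφ : ∀ᶠ t in 𝓝 (0:ℝ),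
      HasDerivAt (fun t => ω (ℓ t) - Fl t) (fderiv ℝ ω (ℓ t) e - Fl' t) t := by
    filter_upwards [hmem] with t ht
    have h1 : HasDerivAt (fun t => ω (ℓ t)) (fderiv ℝ ω (ℓ t) e) t :=
      ((hωd _ ht).hasFDerivAt.comp_hasDerivAt t (hℓd t))
    exact h1.sub (hF1 t)
  -- second derivative at 0
  have hfd : DifferentiableAt ℝ (fderiv ℝ ω) z₀ :=
    ((hC2.contDiffAt (hSopen.mem_nhds hz₀S)).fderiv_right
      (m := 1) (by norm_num)).differentiableAt one_ne_zero
  have hA : DifferentiableAt ℝ (fun w => fderiv ℝ ω w e) z₀ :=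
    (ContinuousLinearMap.apply ℝ ℝ e).differentiableAt.comp z₀ hfd
  have hψ : HasDerivAt (fun t => fderiv ℝ ω (ℓ t) e - Fl' t)
      (fderiv ℝ (fun w => fderiv ℝ ω w e) z₀ e - c2) 0 := by
    have h1 : HasDerivAt (fun t => fderiv ℝ ω (ℓ t) e)
        (fderiv ℝ (fun w => fderiv ℝ ω w e) z₀ e) 0 := by
      have := hA.hasFDerivAt.comp_hasDerivAt_of_eq 0 (hℓd 0) hℓ0.symm
      exact this
    exact h1.sub hF2
  have hloc : IsLocalMax (fun t => ω (ℓ t) - Fl t) 0 := by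
    unfold IsLocalMax IsMaxFilter
    simpa [hℓ0, hℓ] using hmax
  have := sd_test hφ hψ hloc
  linarith

noncomputable def Fc (r K₀ : ℝ) (w : ℂ) : ℝ :=
  (K₀ / Real.cosh r) * (Real.cosh (Real.sqrt 2 * w.re) * Real.cosh (Real.sqrt 2 * w.im))

lemma Fc_nonneg (r K₀ : ℝ) (hK₀ : 0 ≤ K₀) (w : ℂ) : 0 ≤ Fc r K₀ w := by
  unfold Fc
  have := Real.cosh_pos (x := Real.sqrt 2 * w.re)
  have := Real.cosh_pos (x := Real.sqrt 2 * w.im)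
  have := Real.cosh_pos (x := r)
  positivity

lemma Fc_boundary (r K₀ : ℝ) (hr : 0 < r) (hK₀ : 0 ≤ K₀) (z : ℂ)
    (hz : ‖z‖ = r) : K₀ ≤ Fc r K₀ z := by
  have hsq : z.re ^ 2 + z.im ^ 2 = r ^ 2 := by
    rw [← hz, Complex.sq_norm, Complex.normSq_apply]; ring
  have hprod : Real.cosh r ≤
      Real.cosh (Real.sqrt 2 * z.re) * Real.cosh (Real.sqrt 2 * z.im) := by
    have key : ∀ a b : ℝ, a ^ 2 + b ^ 2 = r ^ 2 → b ^ 2 ≤ a ^ 2 →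
        Real.cosh r ≤ Real.cosh (Real.sqrt 2 * a) * Real.cosh (Real.sqrt 2 * b) := by
      intro a b hab hba
      have h1 : Real.cosh r ≤ Real.cosh (Real.sqrt 2 * a) := by
        rw [Real.cosh_le_cosh]
        rw [abs_of_pos hr]
        have h2 : r ^ 2 ≤ (Real.sqrt 2 * a) ^ 2 := by
          rw [mul_pow, Real.sq_sqrt (by norm_num : (2:ℝ) ≥ 0)]
          nlinarith
        calc r = Real.sqrt (r ^ 2) := by rw [Real.sqrt_sq hr.le]
        _ ≤ Real.sqrt ((Real.sqrt 2 * a) ^ 2) := Real.sqrt_le_sqrt h2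
        _ = |Real.sqrt 2 * a| := by rw [Real.sqrt_sq_eq_abs]
      nlinarith [Real.one_le_cosh (Real.sqrt 2 * b), Real.cosh_pos (x := Real.sqrt 2 * a),
        Real.cosh_pos (x := r)]
    rcases le_total (z.im ^ 2) (z.re ^ 2) with h | h
    · exact key z.re z.im hsq h
    · have := key z.im z.re (by linarith) h
      linarith [this, mul_comm (Real.cosh (Real.sqrt 2 * z.im)) (Real.cosh (Real.sqrt 2 * z.re))]
  have hcr : 0 < Real.cosh r := Real.cosh_pos (x := r)
  unfold Fc
  calc K₀ = (K₀ / Real.cosh r) * Real.cosh r := (div_mul_cancel₀ K₀ (ne_of_gt hcr)).symm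
  _ ≤ _ := by
    apply mul_le_mul_of_nonneg_left hprod
    positivity

set_option maxHeartbeats 1000000 in
/-- One-sided comparison: ω ≤ F on the open disk. -/
lemma one_sided (r K₀ : ℝ) (hr : 0 < r) (hK₀ : 0 ≤ K₀) (ω : ℂ → ℝ)
    (hcont : ContinuousOn ω {w : ℂ | ‖w‖ ≤ r})
    (hC2 : ContDiffOn ℝ 2 ω {w : ℂ | ‖w‖ < r})
    (heq : ∀ w : ℂ, ‖w‖ < r → laplacian ω w = 2 * Real.sinh (2 * ω w))
    (hbd : ∀ w : ℂ, ‖w‖ ≤ r → ω w ≤ K₀) :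
    ∀ w : ℂ, ‖w‖ < r → ω w ≤ Fc r K₀ w := by
  by_contra hcon
  push_neg at hcon
  obtain ⟨w₁, hw₁r, hw₁⟩ := hcon
  set K : Set ℂ := {w : ℂ | ‖w‖ ≤ r} with hK
  have hKcb : K = Metric.closedBall 0 r := by
    ext w; simp [hK, Complex.dist_eq, Metric.mem_closedBall]
  have hKcomp : IsCompact K := by rw [hKcb]; exact isCompact_closedBall _ _
  have hFcont : Continuous (Fc r K₀) := by
    unfold Fc
    continuity
  have hgcont : ContinuousOn (fun w => ω w - Fc r K₀ w) K :=
    hcont.sub hFcont.continuousOn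
  obtain ⟨z₀, hz₀K, hz₀max⟩ := hKcomp.exists_isMaxOn ⟨0, by simp [hK, hr.le]⟩ hgcont
  have hz₀max' : ∀ w ∈ K, ω w - Fc r K₀ w ≤ ω z₀ - Fc r K₀ z₀ := hz₀max
  have hgz₀pos : 0 < ω z₀ - Fc r K₀ z₀ :=
    lt_of_lt_of_le (by linarith) (hz₀max' w₁ (le_of_lt hw₁r))
  have hz₀K' : ‖z₀‖ ≤ r := hz₀K
  have hz₀r : ‖z₀‖ < r := by
    rcases lt_or_eq_of_le hz₀K' with h | h
    · exact h
    · exfalso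
      have := Fc_boundary r K₀ hr hK₀ z₀ h
      have := hbd z₀ hz₀K'
      linarith
  -- interior maximum: apply dir_ineq in both directions
  set s := Real.sqrt 2 with hs
  have hs2 : s * s = 2 := Real.mul_self_sqrt (by norm_num)
  set c := K₀ / Real.cosh r with hc
  -- direction 1
  have hmem1 : ∀ᶠ t in 𝓝 (0:ℝ), ‖z₀ + t • (1:ℂ)‖ < r := by
    have hcn : Continuous (fun t : ℝ => ‖z₀ + t • (1:ℂ)‖) := by continuity
    have h0 : ‖z₀ + (0:ℝ) • (1:ℂ)‖ < r := by simpa using hz₀r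
    exact (isOpen_lt hcn continuous_const).mem_nhds h0
  have hd1 : fderiv ℝ (fun w => fderiv ℝ ω w 1) z₀ 1 ≤ 2 * Fc r K₀ z₀ := by
    have A := (c * Real.cosh (s * z₀.im))
    apply dir_ineq ω r z₀ hz₀r hC2 1
      (Fl := fun t => (c * Real.cosh (s * z₀.im)) * Real.cosh (s * z₀.re + s * t))
      (Fl' := fun t => (c * Real.cosh (s * z₀.im)) * s * Real.sinh (s * z₀.re + s * t))
    · intro t; exact hd_cosh _ _ _ t
    · have h := hd_sinh ((c * Real.cosh (s * z₀.im)) * s) (s * z₀.re) s 0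
      have heq2 : (c * Real.cosh (s * z₀.im)) * s * s * Real.cosh (s * z₀.re + s * 0)
          = 2 * Fc r K₀ z₀ := by
        rw [mul_assoc (c * Real.cosh (s * z₀.im)) s s, hs2]
        unfold Fc
        rw [← hc, ← hs]
        ring_nf
      rw [← heq2]
      exact h
    · filter_upwards [hmem1] with t ht
      have hre : (z₀ + t • (1:ℂ)).re = z₀.re + t := by simp
      have him : (z₀ + t • (1:ℂ)).im = z₀.im := by simp
      have hFeq : Fc r K₀ (z₀ + t • (1:ℂ))
          = (c * Real.cosh (s * z₀.im)) * Real.cosh (s * z₀.re + s * t) := by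
        unfold Fc; rw [hre, him, ← hc, ← hs]; ring_nf
      have hFeq0 : Fc r K₀ z₀
          = (c * Real.cosh (s * z₀.im)) * Real.cosh (s * z₀.re + s * 0) := by
        unfold Fc; rw [← hc, ← hs]; ring_nf
      rw [← hFeq, ← hFeq0]
      exact hz₀max' _ (le_of_lt ht)
  -- direction I
  have hmemI : ∀ᶠ t in 𝓝 (0:ℝ), ‖z₀ + t • Complex.I‖ < r := by
    have hcn : Continuous (fun t : ℝ => ‖z₀ + t • Complex.I‖) := by continuity
    have h0 : ‖z₀ + (0:ℝ) • Complex.I‖ < r := by simpa using hz₀r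
    exact (isOpen_lt hcn continuous_const).mem_nhds h0
  have hdI : fderiv ℝ (fun w => fderiv ℝ ω w Complex.I) z₀ Complex.I ≤ 2 * Fc r K₀ z₀ := by
    apply dir_ineq ω r z₀ hz₀r hC2 Complex.I
      (Fl := fun t => (c * Real.cosh (s * z₀.re)) * Real.cosh (s * z₀.im + s * t))
      (Fl' := fun t => (c * Real.cosh (s * z₀.re)) * s * Real.sinh (s * z₀.im + s * t))
    · intro t; exact hd_cosh _ _ _ t
    · have h := hd_sinh ((c * Real.cosh (s * z₀.re)) * s) (s * z₀.im) s 0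
      have heq2 : (c * Real.cosh (s * z₀.re)) * s * s * Real.cosh (s * z₀.im + s * 0)
          = 2 * Fc r K₀ z₀ := by
        rw [mul_assoc (c * Real.cosh (s * z₀.re)) s s, hs2]
        unfold Fc
        rw [← hc, ← hs]
        ring_nf
      rw [← heq2]
      exact h
    · filter_upwards [hmemI] with t ht
      have hre : (z₀ + t • Complex.I).re = z₀.re := by simp
      have him : (z₀ + t • Complex.I).im = z₀.im + t := by simp
      have hFeq : Fc r K₀ (z₀ + t • Complex.I)
          = (c * Real.cosh (s * z₀.re)) * Real.cosh (s * z₀.im + s * t) := by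
        unfold Fc; rw [hre, him, ← hc, ← hs]; ring_nf
      have hFeq0 : Fc r K₀ z₀
          = (c * Real.cosh (s * z₀.re)) * Real.cosh (s * z₀.im + s * 0) := by
        unfold Fc; rw [← hc, ← hs]; ring_nf
      rw [← hFeq, ← hFeq0]
      exact hz₀max' _ (le_of_lt ht)
  -- contradiction
  have hlap : laplacian ω z₀ = 2 * Real.sinh (2 * ω z₀) := heq z₀ hz₀r
  have hsum : laplacian ω z₀ ≤ 4 * Fc r K₀ z₀ := by
    unfold laplacian
    linarith
  have hωpos : 0 < ω z₀ := lt_of_le_of_lt (Fc_nonneg r K₀ hK₀ z₀) (by linarith)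
  have hsinh : 2 * ω z₀ ≤ Real.sinh (2 * ω z₀) :=
    Real.self_le_sinh_iff.2 (by linarith)
  linarith

lemma laplacian_neg (f : ℂ → ℝ) (z : ℂ) : laplacian (fun w => -f w) z = -laplacian f z := by
  unfold laplacian
  have h1 : (fun w => fderiv ℝ (fun x => -f x) w 1) = fun w => -(fderiv ℝ f w 1) := by
    funext w; rw [fderiv_fun_neg]; simp
  have hI : (fun w => fderiv ℝ (fun x => -f x) w Complex.I)
      = fun w => -(fderiv ℝ f w Complex.I) := by
    funext w; rw [fderiv_fun_neg]; simp
  rw [h1, hI, fderiv_fun_neg, fderiv_fun_neg]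
  simp
  ring


/-- Minsky's comparison argument: a solution of `Δω = 2 sinh(2ω)` on the disk of radius
`r` with `|ω| ≤ K₀` is dominated by `(K₀/cosh r)·cosh(√2 u)·cosh(√2 v)`. -/
theorem stmt4 (r K₀ : ℝ) (hr : 0 < r) (hK₀ : 0 ≤ K₀) (ω : ℂ → ℝ)
    (hcont : ContinuousOn ω {w : ℂ | ‖w‖ ≤ r})
    (hC2 : ContDiffOn ℝ 2 ω {w : ℂ | ‖w‖ < r})
    (heq : ∀ w : ℂ, ‖w‖ < r → laplacian ω w = 2 * Real.sinh (2 * ω w))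
    (hbd : ∀ w : ℂ, ‖w‖ ≤ r → |ω w| ≤ K₀) :
    (∀ w : ℂ, ‖w‖ < r →
      |ω w| ≤ (K₀ / Real.cosh r) * (Real.cosh (Real.sqrt 2 * w.re) *
        Real.cosh (Real.sqrt 2 * w.im))) ∧
      |ω 0| ≤ K₀ / Real.cosh r := by
  have h1 : ∀ w : ℂ, ‖w‖ < r → ω w ≤ Fc r K₀ w :=
    one_sided r K₀ hr hK₀ ω hcont hC2 heq (fun w hw => (abs_le.1 (hbd w hw)).2)
  have h2 : ∀ w : ℂ, ‖w‖ < r → -ω w ≤ Fc r K₀ w := by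
    apply one_sided r K₀ hr hK₀ (fun w => -ω w) hcont.neg hC2.neg
    · intro w hw
      rw [laplacian_neg, heq w hw]
      rw [show (2 : ℝ) * -ω w = -(2 * ω w) by ring, Real.sinh_neg]
      ring
    · intro w hw
      have := (abs_le.1 (hbd w hw)).1
      linarith
  have hmain : ∀ w : ℂ, ‖w‖ < r → |ω w| ≤ Fc r K₀ w := by
    intro w hw
    exact abs_le.2 ⟨by linarith [h2 w hw], h1 w hw⟩
  constructor
  · intro w hw
    exact hmain w hw
  · have h0 : ‖(0:ℂ)‖ < r := by simpa using hr
    have := hmain 0 h0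
    have hF0 : Fc r K₀ 0 = K₀ / Real.cosh r := by
      unfold Fc; simp
    rwa [hF0] at this
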